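/- Let G be a minimal counterexample (fewest vertices, then most edges) among planar graphs of maximum degree Δ ≤ 6 with χ₂(G) > 21. Then G does not contain a vertex of degree 3 incident to a triangular face. -/

import Mathlib

open SimpleGraph

/-- The square of a graph `G`: two distinct vertices are adjacent iff they are at
distance at most 2 in `G`. -/
def SimpleGraph.square {V : Type*} (G : SimpleGraph V) : SimpleGraph V where
  Adj u v := u ≠ v ∧ (G.Adj u v ∨ ∃ w, G.Adj u w ∧ G.Adj w v)
  symm := ⟨fun u v ⟨h1, h2⟩ => ⟨h1.symm, h2.elim (fun h => Or.inl h.symm)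
    (fun ⟨w, h3, h4⟩ => Or.inr ⟨w, h4.symm, h3.symm⟩)⟩⟩
  loopless := ⟨fun _ h => h.1 rfl⟩

/-- The 2-chromatic number of a graph: the chromatic number of its square. -/
noncomputable def chi2 {V : Type*} (G : SimpleGraph V) : ℕ∞ :=
  G.square.chromaticNumber

/-- The degree of a vertex, as a cardinality (instance-free). -/
noncomputable def degN {V : Type*} (G : SimpleGraph V) (v : V) : ℕ :=
  Nat.card {u // G.Adj v u}

/-- `G` has maximum degree `Δ`. -/
def maxDegIs {V : Type*} (G : SimpleGraph V) (Δ : ℕ) : Prop :=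
  (∀ v, degN G v ≤ Δ) ∧ ∃ v, degN G v = Δ

/-- A graph is planar if it has a drawing in the plane: an injective placement of the
vertices and, for each edge, a simple arc joining the endpoints, such that arcs avoid
all vertex points and the interiors of arcs of distinct edges are disjoint. -/
def IsPlanar {V : Type*} (G : SimpleGraph V) : Prop :=
  ∃ (pos : V → ℝ × ℝ) (arc : V → V → ℝ → ℝ × ℝ),
    Function.Injective pos ∧
    (∀ u v, G.Adj u v →
      Continuous (arc u v) ∧ arc u v 0 = pos u ∧ arc u v 1 = pos v ∧
      Set.InjOn (arc u v) (Set.Icc 0 1) ∧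
      ∀ w, pos w ∉ arc u v '' Set.Ioo 0 1) ∧
    ∀ u v x y, G.Adj u v → G.Adj x y → s(u, v) ≠ s(x, y) →
      Disjoint (arc u v '' Set.Ioo 0 1) (arc x y '' Set.Ioo 0 1)

/-- `G` is a minimal counterexample (fewest vertices, then most edges) among planar
graphs of maximum degree at most `6` to the bound `χ₂ ≤ 21`. -/
def MinimalCex6 {V : Type*} [Fintype V] (G : SimpleGraph V) : Prop :=
  IsPlanar G ∧ (∀ v, degN G v ≤ 6) ∧ (21 : ℕ∞) < chi2 G ∧
  ∀ (n : ℕ) (H : SimpleGraph (Fin n)), IsPlanar H →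
    (∀ v, degN H v ≤ 6) →
    (n < Fintype.card V ∨
      (n = Fintype.card V ∧ Nat.card G.edgeSet < Nat.card H.edgeSet)) →
    chi2 H ≤ (21 : ℕ∞)

section Comb

variable {V : Type*} [Fintype V] [DecidableEq V] (G : SimpleGraph V) [DecidableRel G.Adj]

/-- The involution exchanging the two darts of each edge. -/
def dartSymmPerm : Equiv.Perm G.Dart :=
  ⟨SimpleGraph.Dart.symm, SimpleGraph.Dart.symm,
    fun d => d.symm_symm, fun d => d.symm_symm⟩

/-- A combinatorial plane embedding (rotation system) of `G`: a permutation of the darts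
whose cycles are exactly the sets of darts sharing a tail vertex. -/
structure PlaneEmbedding where
  rot : Equiv.Perm G.Dart
  same_vertex : ∀ d d' : G.Dart, rot.SameCycle d d' ↔ d.toProd.1 = d'.toProd.1

variable {G}

/-- The face-tracing permutation of an embedding. -/
def PlaneEmbedding.facePerm (e : PlaneEmbedding G) : Equiv.Perm G.Dart :=
  e.rot * dartSymmPerm G

/-- Darts lying on the same face. -/
def PlaneEmbedding.faceSetoid (e : PlaneEmbedding G) : Setoid G.Dart :=
  ⟨e.facePerm.SameCycle,
    ⟨fun _ => Equiv.Perm.SameCycle.refl _ _, fun h => h.symm, fun h h' => h.trans h'⟩⟩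

/-- The faces of an embedding: orbits of the face-tracing permutation on darts. -/
def PlaneEmbedding.Faces (e : PlaneEmbedding G) : Type _ := Quotient e.faceSetoid

/-- The degree of a face: the number of darts on it (so cut-edges count twice). -/
noncomputable def PlaneEmbedding.faceDeg (e : PlaneEmbedding G) (f : e.Faces) : ℕ :=
  Nat.card {d : G.Dart // Quotient.mk e.faceSetoid d = f}

/-- A vertex is incident to a face if some dart of the face has it as tail. -/
def PlaneEmbedding.VertexOnFace (e : PlaneEmbedding G) (v : V) (f : e.Faces) : Prop :=
  ∃ d : G.Dart, d.toProd.1 = v ∧ Quotient.mk e.faceSetoid d = f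

/-- A vertex is triangulated if all its incident faces are triangles. -/
def PlaneEmbedding.Triangulated (e : PlaneEmbedding G) (v : V) : Prop :=
  ∀ f : e.Faces, e.VertexOnFace v f → e.faceDeg f = 3

noncomputable instance (e : PlaneEmbedding G) : Fintype e.Faces :=
  @Fintype.ofFinite _ (Quotient.finite _)

/-- The embedding is on the sphere: Euler's formula holds. -/
def PlaneEmbedding.IsSphere (e : PlaneEmbedding G) : Prop :=
  (Fintype.card V : ℤ) - G.edgeFinset.card + Nat.card e.Faces = 2

end Comb


section Aux

open Equiv Equiv.Perm

variable {V : Type*} [Fintype V] [DecidableEq V] {G : SimpleGraph V} [DecidableRel G.Adj]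

lemma rot_tail (e : PlaneEmbedding G) (d : G.Dart) : (e.rot d).toProd.1 = d.toProd.1 :=
  ((e.same_vertex d (e.rot d)).1 ⟨1, by simp⟩).symm

lemma facePerm_tail (e : PlaneEmbedding G) (d : G.Dart) :
    (e.facePerm d).toProd.1 = d.toProd.2 := by
  have : e.facePerm d = e.rot d.symm := rfl
  rw [this, rot_tail]
  rfl

lemma face_triangle (e : PlaneEmbedding G) (f : e.Faces) (hdeg : e.faceDeg f = 3)
    {v : V} (hv : e.VertexOnFace v f) :
    ∃ a b : V, G.Adj v a ∧ G.Adj a b ∧ G.Adj b v := by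
  classical
  obtain ⟨d, hd1, hd2⟩ := hv
  set P := e.facePerm with hP
  have hmem : ∀ d' : G.Dart, Quotient.mk e.faceSetoid d' = f ↔ P.SameCycle d d' := by
    intro d'
    rw [← hd2, Quotient.eq]
    exact ⟨fun h => h.symm, fun h => h.symm⟩
  have hcard : Nat.card {d' : G.Dart // P.SameCycle d d'} = 3 := by
    rw [← hdeg]
    unfold PlaneEmbedding.faceDeg
    exact Nat.card_congr (Equiv.subtypeEquivRight (fun d' => (hmem d').symm))
  have hPd : P d ≠ d := by
    intro h
    have : ∀ d' : G.Dart, P.SameCycle d d' ↔ d' = d := by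
      intro d'
      constructor
      · rintro ⟨k, rfl⟩
        exact zpow_apply_eq_self_of_apply_eq_self h k
      · rintro rfl; exact Equiv.Perm.SameCycle.refl _ _
    rw [Nat.card_congr (Equiv.subtypeEquivRight this)] at hcard
    simp [Nat.card_eq_fintype_card] at hcard
  have hsupp : ∀ d' : G.Dart, d' ∈ (P.cycleOf d).support ↔ P.SameCycle d d' := by
    intro d'
    rw [Equiv.Perm.mem_support_cycleOf_iff]
    simp only [Equiv.Perm.mem_support]
    exact ⟨fun h => h.1, fun h => ⟨h, hPd⟩⟩
  have hscard : (P.cycleOf d).support.card = 3 := by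
    rw [← hcard, Nat.card_eq_fintype_card]
    rw [Fintype.card_subtype]
    congr 1
    ext a
    simpa using hsupp a
  have hcyc : (P.cycleOf d).IsCycle := Equiv.Perm.isCycle_cycleOf P hPd
  have horder : orderOf (P.cycleOf d) = 3 := hcyc.orderOf.trans hscard
  have hP3 : (P ^ 3) d = d := by
    rw [← Equiv.Perm.cycleOf_pow_apply_self, ← horder, pow_orderOf_eq_one]
    rfl
  -- extract the triangle
  refine ⟨d.toProd.2, (P d).toProd.2, ?_, ?_, ?_⟩
  · have := d.adj; rwa [hd1] at this
  · have := (P d).adj; rwa [facePerm_tail] at this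
  · have h2 : (P (P d)).toProd.1 = (P d).toProd.2 := facePerm_tail e (P d)
    have h3 : (P (P (P d))).toProd.1 = (P (P d)).toProd.2 := facePerm_tail e (P (P d))
    have hPPP : P (P (P d)) = d := by
      have : (P ^ 3) d = P (P (P d)) := by
        rw [pow_succ, pow_succ, pow_one]; rfl
      rw [← this, hP3]
    have hv2 : (P (P d)).toProd.2 = v := by rw [← h3, hPPP, hd1]
    have := (P (P d)).adj
    rwa [h2, hv2] at this

end Aux


section Aux2

variable {V : Type*} [Fintype V] [DecidableEq V] {G : SimpleGraph V} [DecidableRel G.Adj]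

lemma degN_eq_degree (v : V) : degN G v = G.degree v := by
  unfold degN
  rw [Nat.card_eq_fintype_card, ← SimpleGraph.card_neighborSet_eq_degree]
  exact Fintype.card_congr (Equiv.subtypeEquivRight fun u => (G.mem_neighborSet v u).symm)

lemma neighbors_of_deg3 {v a b : V} (hdeg : degN G v = 3) (ha : G.Adj v a) (hb : G.Adj v b)
    (hab : a ≠ b) :
    ∃ z, G.Adj v z ∧ z ≠ a ∧ z ≠ b ∧ ∀ u, G.Adj v u → u = a ∨ u = b ∨ u = z := by
  have h3 : (G.neighborFinset v).card = 3 := by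
    have := degN_eq_degree (G := G) v
    unfold SimpleGraph.degree at this
    omega
  have has : a ∈ G.neighborFinset v := by simpa using ha
  have hbs : b ∈ G.neighborFinset v := by simpa using hb
  have hsub : ({a, b} : Finset V) ⊆ G.neighborFinset v := by
    intro u hu; simp at hu; rcases hu with rfl | rfl <;> assumption
  have hcd : ((G.neighborFinset v) \ {a, b}).card = 1 := by
    rw [Finset.card_sdiff_of_subset hsub, h3, Finset.card_insert_of_notMem (by simpa using hab),
      Finset.card_singleton]
  obtain ⟨z, hz⟩ := Finset.card_eq_one.mp hcd
  have hzmem : z ∈ (G.neighborFinset v) \ ({a, b} : Finset V) := by rw [hz]; simp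
  simp only [Finset.mem_sdiff, Finset.mem_insert, Finset.mem_singleton,
    SimpleGraph.mem_neighborFinset, not_or] at hzmem
  refine ⟨z, hzmem.1, hzmem.2.1, hzmem.2.2, fun u hu => ?_⟩
  by_cases hua : u = a
  · exact Or.inl hua
  by_cases hub : u = b
  · exact Or.inr (Or.inl hub)
  have : u ∈ (G.neighborFinset v) \ ({a, b} : Finset V) := by
    simp [hu, hua, hub]
  rw [hz] at this
  simp at this
  exact Or.inr (Or.inr this)

/-- The graph obtained from `G` by deleting `v` and adding the edge `a z`. -/
def aug (G : SimpleGraph V) (v a z : V) (haz : a ≠ z) : SimpleGraph {u : V // u ≠ v} where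
  Adj p q := G.Adj p q ∨ ((p : V) = a ∧ (q : V) = z) ∨ ((p : V) = z ∧ (q : V) = a)
  symm := by
    refine ⟨?_⟩
    rintro p q (h | ⟨h1, h2⟩ | ⟨h1, h2⟩)
    · exact Or.inl h.symm
    · exact Or.inr (Or.inr ⟨h2, h1⟩)
    · exact Or.inr (Or.inl ⟨h2, h1⟩)
  loopless := by
    refine ⟨?_⟩
    rintro p (h | ⟨h1, h2⟩ | ⟨h1, h2⟩)
    · exact G.loopless.irrefl _ h
    · exact haz (h1.symm.trans h2)
    · exact haz (h2.symm.trans h1)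

lemma aug_adj {v a z : V} (haz : a ≠ z) (p q : {u : V // u ≠ v}) :
    (aug G v a z haz).Adj p q ↔
      (G.Adj p q ∨ ((p : V) = a ∧ (q : V) = z) ∨ ((p : V) = z ∧ (q : V) = a)) := Iff.rfl

lemma aug_deg {v a z : V} (haz : a ≠ z) (hmax : ∀ u, degN G u ≤ 6)
    (hva : G.Adj v a) (hvz : G.Adj v z) (p : {u : V // u ≠ v}) :
    degN (aug G v a z haz) p ≤ 6 := by
  classical
  have key : degN (aug G v a z haz) p ≤ degN G (p : V) := by
    unfold degN
    have hGv : ∀ q : {u : V // u ≠ v}, (aug G v a z haz).Adj p q → ¬ G.Adj (p : V) (q : V) →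
        G.Adj (p : V) v := by
      rintro q (h | ⟨h1, h2⟩ | ⟨h1, h2⟩) hn
      · exact absurd h hn
      · rw [h1]; exact hva.symm
      · rw [h1]; exact hvz.symm
    refine Nat.card_le_card_of_injective
      (fun q => if h : G.Adj (p : V) (q : V) then ⟨(q : V), h⟩
        else ⟨v, hGv q.1 q.2 h⟩) ?_
    rintro ⟨q1, hq1⟩ ⟨q2, hq2⟩ heq
    dsimp only at heq
    split_ifs at heq with h1 h2 h2 <;>
      simp only [Subtype.mk.injEq] at heq
    · exact Subtype.ext (Subtype.ext heq)
    · exact absurd heq q1.2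
    · exact absurd heq.symm q2.2
    · -- both mapped to v; show q1 = q2
      have e : ∀ q : {u : V // u ≠ v}, (aug G v a z haz).Adj p q → ¬ G.Adj (p : V) (q : V) →
          ((p : V) = a ∧ (q : V) = z) ∨ ((p : V) = z ∧ (q : V) = a) := by
        rintro q (h | h | h) hn
        · exact absurd h hn
        · exact Or.inl h
        · exact Or.inr h
      rcases e q1 hq1 h1 with ⟨hp1, h1'⟩ | ⟨hp1, h1'⟩ <;>
        rcases e q2 hq2 h2 with ⟨hp2, h2'⟩ | ⟨hp2, h2'⟩
      · exact Subtype.ext (Subtype.ext (h1'.trans h2'.symm))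
      · exact absurd (hp1.symm.trans hp2) haz
      · exact absurd (hp2.symm.trans hp1) haz
      · exact Subtype.ext (Subtype.ext (h1'.trans h2'.symm))
  exact key.trans (hmax _)

end Aux2


section Aux3

variable {V : Type*} [DecidableEq V] {G : SimpleGraph V}

lemma aug_planar {v a z : V} (haz : a ≠ z) (hva : G.Adj v a) (hvz : G.Adj v z)
    (hG : IsPlanar G) : IsPlanar (aug G v a z haz) := by
  classical
  obtain ⟨pos, arc, hinj, harc, hdisj⟩ := hG
  obtain ⟨γ, hγ0, hγ1, hγc, hγinj, hγvx, hγd⟩ :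
      ∃ γ : ℝ → ℝ × ℝ, γ 0 = pos a ∧ γ 1 = pos z ∧ Continuous γ ∧
        Set.InjOn γ (Set.Icc 0 1) ∧
        (∀ w, w ≠ v → pos w ∉ γ '' Set.Ioo 0 1) ∧
        (∀ x y, G.Adj x y → x ≠ v → y ≠ v →
          Disjoint (γ '' Set.Ioo 0 1) (arc x y '' Set.Ioo 0 1)) := by
    obtain ⟨hAc, hA0, hA1, hAinj, hAv⟩ := harc a v hva.symm
    obtain ⟨hBc, hB0, hB1, hBinj, hBv⟩ := harc v z hvz
    set γ : ℝ → ℝ × ℝ := fun t => if t ≤ (1/2 : ℝ) then arc a v (2*t) else arc v z (2*t-1)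
      with hγdef
    have hs1 : s(a, v) ≠ s(v, z) := by
      intro hcon
      rw [Sym2.eq_iff] at hcon
      rcases hcon with ⟨h1, h2⟩ | ⟨h1, h2⟩
      · exact hva.ne' h1
      · exact haz h1
    have hABd : Disjoint (arc a v '' Set.Ioo 0 1) (arc v z '' Set.Ioo 0 1) :=
      hdisj a v v z hva.symm hvz hs1
    have hγ0 : γ 0 = pos a := by
      simp only [hγdef]
      rw [if_pos (by norm_num : (0:ℝ) ≤ 1/2), mul_zero, hA0]
    have hγ1 : γ 1 = pos z := by
      simp only [hγdef]
      rw [if_neg (by norm_num : ¬((1:ℝ) ≤ 1/2)), show (2*(1:ℝ)-1) = 1 by norm_num, hB1]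
    have hγc : Continuous γ := by
      refine Continuous.if_le ?_ ?_ continuous_id continuous_const ?_
      · exact hAc.comp (continuous_const.mul continuous_id)
      · exact hBc.comp ((continuous_const.mul continuous_id).sub continuous_const)
      · intro x hx
        change x = 1/2 at hx
        rw [hx]
        norm_num [hA1, hB0]
    have himg : γ '' Set.Ioo 0 1 ⊆
        (arc a v '' Set.Ioo 0 1) ∪ {pos v} ∪ (arc v z '' Set.Ioo 0 1) := by
      rintro y ⟨t, ht, rfl⟩
      by_cases h : t ≤ 1/2
      · by_cases h2 : t = 1/2
        · left; right
          subst h2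
          simp only [hγdef, Set.mem_singleton_iff]
          rw [if_pos le_rfl, show (2*(1/2:ℝ)) = 1 by norm_num, hA1]
        · left; left
          refine ⟨2*t, ⟨by linarith [ht.1], by
            have : t < 1/2 := lt_of_le_of_ne h h2
            linarith⟩, ?_⟩
          simp only [hγdef]
          rw [if_pos h]
      · right
        refine ⟨2*t-1, ⟨by linarith [not_le.mp h], by linarith [ht.2]⟩, ?_⟩
        simp only [hγdef]
        rw [if_neg h]
    have hmix : ∀ s s', s ∈ Set.Icc (0:ℝ) 1 → s' ∈ Set.Icc (0:ℝ) 1 → s ≤ 1/2 → ¬(s' ≤ 1/2) →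
        arc a v (2*s) ≠ arc v z (2*s'-1) := by
      intro s s' hs hs' h h' heq
      have hu1 : (0:ℝ) < 2*s'-1 := by linarith [not_le.mp h']
      have hu2 : 2*s'-1 ≤ 1 := by linarith [hs'.2]
      have hcases : arc a v (2*s) = pos a ∨ arc a v (2*s) = pos v ∨
          arc a v (2*s) ∈ arc a v '' Set.Ioo 0 1 := by
        by_cases h0 : s = 0
        · left; rw [h0, mul_zero, hA0]
        · by_cases h1 : s = 1/2
          · right; left; rw [h1, show 2*(1/2:ℝ) = 1 by norm_num, hA1]
          · right; right
            have hs0 : 0 < s := lt_of_le_of_ne hs.1 (Ne.symm h0)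
            have hs12 : s < 1/2 := lt_of_le_of_ne h h1
            exact ⟨2*s, ⟨by linarith, by linarith⟩, rfl⟩
      rcases eq_or_lt_of_le hu2 with he | hlt
      · rw [he, hB1] at heq
        rcases hcases with h3 | h3 | h3
        · exact haz (hinj (h3.symm.trans heq))
        · exact hvz.ne (hinj (h3.symm.trans heq))
        · exact hAv z (heq ▸ h3)
      · have hmem : arc v z (2*s'-1) ∈ arc v z '' Set.Ioo 0 1 := ⟨_, ⟨hu1, hlt⟩, rfl⟩
        have hmem' : arc a v (2*s) ∈ arc v z '' Set.Ioo 0 1 := heq.symm ▸ hmem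
        rcases hcases with h3 | h3 | h3
        · exact hBv a (h3 ▸ hmem')
        · exact hBv v (h3 ▸ hmem')
        · exact Set.disjoint_left.mp hABd h3 hmem'
    have hγinj : Set.InjOn γ (Set.Icc 0 1) := by
      intro t ht t' ht' heq
      simp only [hγdef] at heq
      by_cases h : t ≤ 1/2 <;> by_cases h' : t' ≤ 1/2
      · rw [if_pos h, if_pos h'] at heq
        have := hAinj ⟨by linarith [ht.1], by linarith⟩ ⟨by linarith [ht'.1], by linarith⟩ heq
        linarith
      · rw [if_pos h, if_neg h'] at heq
        exact absurd heq (hmix t t' ht ht' h h')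
      · rw [if_neg h, if_pos h'] at heq
        exact absurd heq.symm (hmix t' t ht' ht h' h)
      · rw [if_neg h, if_neg h'] at heq
        have := hBinj ⟨by linarith [not_le.mp h], by linarith [ht.2]⟩
          ⟨by linarith [not_le.mp h'], by linarith [ht'.2]⟩ heq
        linarith
    refine ⟨γ, hγ0, hγ1, hγc, hγinj, ?_, ?_⟩
    · intro w hw hmem
      rcases himg hmem with (h | h) | h
      · exact hAv w h
      · exact hw (hinj (Set.mem_singleton_iff.mp h))
      · exact hBv w h
    · intro x y hxy hx hy
      have hsx : s(a, v) ≠ s(x, y) := by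
        intro hcon
        rw [Sym2.eq_iff] at hcon
        rcases hcon with ⟨h1, h2⟩ | ⟨h1, h2⟩
        · exact hy h2.symm
        · exact hx h2.symm
      have hsy : s(v, z) ≠ s(x, y) := by
        intro hcon
        rw [Sym2.eq_iff] at hcon
        rcases hcon with ⟨h1, h2⟩ | ⟨h1, h2⟩
        · exact hx h1.symm
        · exact hy h1.symm
      have d1 := hdisj a v x y hva.symm hxy hsx
      have d2 := hdisj v z x y hvz hxy hsy
      rw [Set.disjoint_left]
      intro p hp hp2
      rcases himg hp with (h | h) | h
      · exact Set.disjoint_left.mp d1 h hp2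
      · rw [Set.mem_singleton_iff] at h
        exact (harc x y hxy).2.2.2.2 v (h ▸ hp2)
      · exact Set.disjoint_left.mp d2 h hp2
  -- now γ is opaque
  have hrev : (fun t => γ (1-t)) '' Set.Ioo 0 1 = γ '' Set.Ioo 0 1 := by
    ext y
    constructor
    · rintro ⟨t, ht, rfl⟩
      exact ⟨1-t, ⟨by linarith [ht.2], by linarith [ht.1]⟩, rfl⟩
    · rintro ⟨t, ht, rfl⟩
      exact ⟨1-t, ⟨by linarith [ht.2], by linarith [ht.1]⟩, by norm_num⟩
  have hplain : ∀ p q : {u : V // u ≠ v}, (aug G v a z haz).Adj p q →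
      ¬((p : V) = a ∧ (q : V) = z) → ¬((p : V) = z ∧ (q : V) = a) → G.Adj (p : V) (q : V) := by
    rintro p q (h | h | h) h1 h2
    · exact h
    · exact absurd h h1
    · exact absurd h h2
  refine ⟨fun u => pos (u : V), fun p q =>
    if (p : V) = a ∧ (q : V) = z then γ
    else if (p : V) = z ∧ (q : V) = a then (fun t => γ (1 - t))
    else arc (p : V) (q : V),
    fun u1 u2 h => Subtype.ext (hinj h), ?_, ?_⟩
  · intro p q hpq
    by_cases h1 : (p : V) = a ∧ (q : V) = z
    · simp only [if_pos h1]
      refine ⟨hγc, ?_, ?_, hγinj, fun w => hγvx (w : V) w.2⟩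
      · rw [hγ0, h1.1]
      · rw [hγ1, h1.2]
    · simp only [if_neg h1]
      by_cases h2 : (p : V) = z ∧ (q : V) = a
      · simp only [if_pos h2]
        refine ⟨hγc.comp (continuous_const.sub continuous_id), ?_, ?_, ?_, ?_⟩
        · show γ (1 - 0) = pos (p : V)
          rw [sub_zero, hγ1, h2.1]
        · show γ (1 - 1) = pos (q : V)
          rw [sub_self, hγ0, h2.2]
        · intro t ht t' ht' heq
          have := hγinj (⟨by linarith [ht.2], by linarith [ht.1]⟩ : (1-t) ∈ Set.Icc (0:ℝ) 1)
            (⟨by linarith [ht'.2], by linarith [ht'.1]⟩ : (1-t') ∈ Set.Icc (0:ℝ) 1) heq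
          linarith
        · intro w hw
          rw [hrev] at hw
          exact hγvx (w : V) w.2 hw
      · simp only [if_neg h2]
        have hpq' := hplain p q hpq h1 h2
        obtain ⟨c1, c2, c3, c4, c5⟩ := harc _ _ hpq'
        exact ⟨c1, c2, c3, c4, fun w => c5 (w : V)⟩
  · intro p q x y hpq hxy hne
    have hne' : s((p : V), (q : V)) ≠ s((x : V), (y : V)) := by
      intro hcon
      apply hne
      rw [Sym2.eq_iff] at hcon ⊢
      rcases hcon with ⟨e1, e2⟩ | ⟨e1, e2⟩
      · exact Or.inl ⟨Subtype.ext e1, Subtype.ext e2⟩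
      · exact Or.inr ⟨Subtype.ext e1, Subtype.ext e2⟩
    by_cases h1 : (p : V) = a ∧ (q : V) = z
    · simp only [if_pos h1]
      by_cases h1' : (x : V) = a ∧ (y : V) = z
      · exact absurd (by rw [h1.1, h1.2, h1'.1, h1'.2]) hne'
      · simp only [if_neg h1']
        by_cases h2' : (x : V) = z ∧ (y : V) = a
        · exact absurd (by rw [h1.1, h1.2, h2'.1, h2'.2, Sym2.eq_swap]) hne'
        · simp only [if_neg h2']
          exact hγd _ _ (hplain x y hxy h1' h2') x.2 y.2
    · simp only [if_neg h1]
      by_cases h2 : (p : V) = z ∧ (q : V) = a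
      · simp only [if_pos h2]
        by_cases h1' : (x : V) = a ∧ (y : V) = z
        · exact absurd (by rw [h2.1, h2.2, h1'.1, h1'.2, Sym2.eq_swap]) hne'
        · simp only [if_neg h1']
          by_cases h2' : (x : V) = z ∧ (y : V) = a
          · exact absurd (by rw [h2.1, h2.2, h2'.1, h2'.2]) hne'
          · simp only [if_neg h2']
            rw [hrev]
            exact hγd _ _ (hplain x y hxy h1' h2') x.2 y.2
      · simp only [if_neg h2]
        by_cases h1' : (x : V) = a ∧ (y : V) = z
        · simp only [if_pos h1']
          exact (hγd _ _ (hplain p q hpq h1 h2) p.2 q.2).symm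
        · simp only [if_neg h1']
          by_cases h2' : (x : V) = z ∧ (y : V) = a
          · simp only [if_pos h2']
            rw [hrev]
            exact (hγd _ _ (hplain p q hpq h1 h2) p.2 q.2).symm
          · simp only [if_neg h2']
            exact hdisj _ _ _ _ (hplain p q hpq h1 h2) (hplain x y hxy h1' h2') hne'

end Aux3


section Aux4

lemma square_adj {W : Type*} (H : SimpleGraph W) (u v : W) :
    H.square.Adj u v ↔ u ≠ v ∧ (H.Adj u v ∨ ∃ w, H.Adj u w ∧ H.Adj w v) := Iff.rfl

lemma square_colorable_transport {W₁ W₂ : Type*} {H₁ : SimpleGraph W₁} {H₂ : SimpleGraph W₂}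
    (φ : W₁ ≃ W₂) (h : ∀ p q, H₁.Adj p q ↔ H₂.Adj (φ p) (φ q)) {n : ℕ}
    (hc : H₂.square.Colorable n) : H₁.square.Colorable n := by
  refine SimpleGraph.Colorable.of_hom (RelEmbedding.toRelHom
    (⟨⟨fun p => φ p, φ.injective⟩, ?_⟩ : H₁.square ↪g H₂.square)) hc
  intro p q
  show H₂.square.Adj (φ p) (φ q) ↔ H₁.square.Adj p q
  rw [square_adj, square_adj]
  constructor
  · rintro ⟨hne, hadj | ⟨w, hw1, hw2⟩⟩
    · exact ⟨fun e => hne (congrArg φ e), Or.inl ((h p q).mpr hadj)⟩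
    · refine ⟨fun e => hne (congrArg φ e), Or.inr ⟨φ.symm w, ?_, ?_⟩⟩
      · exact (h p (φ.symm w)).mpr (by simpa using hw1)
      · exact (h (φ.symm w) q).mpr (by simpa using hw2)
  · rintro ⟨hne, hadj | ⟨w, hw1, hw2⟩⟩
    · exact ⟨fun e => hne (φ.injective e), Or.inl ((h p q).mp hadj)⟩
    · exact ⟨fun e => hne (φ.injective e), Or.inr ⟨φ w, (h p w).mp hw1, (h w q).mp hw2⟩⟩

lemma planar_transport {W₁ W₂ : Type*} {H₁ : SimpleGraph W₁} {H₂ : SimpleGraph W₂}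
    (φ : W₁ ≃ W₂) (h : ∀ p q, H₁.Adj p q ↔ H₂.Adj (φ p) (φ q)) (hp : IsPlanar H₁) :
    IsPlanar H₂ := by
  obtain ⟨pos, arc, hinj, harc, hdisj⟩ := hp
  have hadj : ∀ u v, H₂.Adj u v → H₁.Adj (φ.symm u) (φ.symm v) := by
    intro u v huv
    rw [h]
    simpa using huv
  refine ⟨fun u => pos (φ.symm u), fun u v => arc (φ.symm u) (φ.symm v),
    fun u1 u2 e => φ.symm.injective (hinj e), ?_, ?_⟩
  · intro u v huv
    obtain ⟨c1, c2, c3, c4, c5⟩ := harc _ _ (hadj u v huv)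
    exact ⟨c1, c2, c3, c4, fun w => c5 (φ.symm w)⟩
  · intro u v x y huv hxy hne
    refine hdisj _ _ _ _ (hadj u v huv) (hadj x y hxy) ?_
    intro hcon
    apply hne
    rw [Sym2.eq_iff] at hcon ⊢
    rcases hcon with ⟨e1, e2⟩ | ⟨e1, e2⟩
    · exact Or.inl ⟨φ.symm.injective e1, φ.symm.injective e2⟩
    · exact Or.inr ⟨φ.symm.injective e1, φ.symm.injective e2⟩

lemma degN_transport {W₁ W₂ : Type*} {H₁ : SimpleGraph W₁} {H₂ : SimpleGraph W₂}
    (φ : W₁ ≃ W₂) (h : ∀ p q, H₁.Adj p q ↔ H₂.Adj (φ p) (φ q)) (p : W₁) :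
    degN H₂ (φ p) = degN H₁ p :=
  (Nat.card_congr (Equiv.subtypeEquiv φ (fun q => h p q))).symm

/-- Relabel a graph along an equivalence with `Fin n`. -/
def toFinGraph {W : Type*} (H : SimpleGraph W) {n : ℕ} (φ : W ≃ Fin n) :
    SimpleGraph (Fin n) where
  Adj i j := H.Adj (φ.symm i) (φ.symm j)
  symm := ⟨fun _ _ hj => hj.symm⟩
  loopless := ⟨fun _ hi => H.loopless.irrefl _ hi⟩

lemma toFinGraph_compat {W : Type*} (H : SimpleGraph W) {n : ℕ} (φ : W ≃ Fin n) :
    ∀ p q, H.Adj p q ↔ (toFinGraph H φ).Adj (φ p) (φ q) := by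
  intro p q
  show H.Adj p q ↔ H.Adj (φ.symm (φ p)) (φ.symm (φ q))
  rw [Equiv.symm_apply_apply, Equiv.symm_apply_apply]

end Aux4

set_option maxHeartbeats 1000000 in
/-- A minimal counterexample to the bound `χ₂ ≤ 21` for planar graphs of maximum degree
at most 6 does not contain a vertex of degree 3 incident to a triangular face. -/
theorem stmt16 {V : Type*} [Fintype V] [DecidableEq V] (G : SimpleGraph V)
    [DecidableRel G.Adj] (hmin : MinimalCex6 G)
    (e : PlaneEmbedding G) (hsphere : e.IsSphere) :
    ¬ ∃ (v : V) (f : e.Faces), degN G v = 3 ∧ e.faceDeg f = 3 ∧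
      e.VertexOnFace v f := by
  rintro ⟨v, f, hdeg3, hf3, hvf⟩
  classical
  obtain ⟨hplanar, hmax, hchi, hminl⟩ := hmin
  obtain ⟨a, b, hva, hab, hbv⟩ := face_triangle e f hf3 hvf
  obtain ⟨z, hvz, hza, hzb, hN⟩ := neighbors_of_deg3 hdeg3 hva hbv.symm hab.ne
  have haz : a ≠ z := Ne.symm hza
  set H := aug G v a z haz with hH
  have hHp : IsPlanar H := aug_planar haz hva hvz hplanar
  have hHdeg : ∀ p, degN H p ≤ 6 := fun p => aug_deg haz hmax hva hvz p
  obtain ⟨n, hlt, ⟨φ⟩⟩ : ∃ n, n < Fintype.card V ∧ Nonempty ({u : V // u ≠ v} ≃ Fin n) :=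
    ⟨Fintype.card {u : V // u ≠ v}, Fintype.card_subtype_lt (x := v) (by simp),
      ⟨Fintype.equivFin _⟩⟩
  set K := toFinGraph H φ with hK
  have hcompat := toFinGraph_compat H φ
  have hKp : IsPlanar K := planar_transport φ hcompat hHp
  have hKdeg : ∀ i, degN K i ≤ 6 := by
    intro i
    have h1 := degN_transport φ hcompat (φ.symm i)
    rw [Equiv.apply_symm_apply] at h1
    rw [h1]
    exact hHdeg _
  have hK21 : chi2 K ≤ 21 := hminl n K hKp hKdeg (Or.inl hlt)
  have hHcol : H.square.Colorable 21 := by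
    refine square_colorable_transport φ hcompat ?_
    rw [← SimpleGraph.chromaticNumber_le_iff_colorable]
    exact_mod_cast hK21
  obtain ⟨c⟩ := hHcol
  -- the set of square-neighbours of v
  set T : Finset V := insert a (insert b (insert z
    (((G.neighborFinset a).erase v ∪ (G.neighborFinset b).erase v) ∪
      (G.neighborFinset z).erase v))) with hT
  have hdeg6 : ∀ u, (G.neighborFinset u).card ≤ 6 := by
    intro u
    have := degN_eq_degree (G := G) u
    unfold SimpleGraph.degree at this
    have h2 := hmax u
    omega
  have h5 : ∀ u, G.Adj v u → ((G.neighborFinset u).erase v).card ≤ 5 := by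
    intro u hu
    rw [Finset.card_erase_of_mem (by simpa using hu.symm)]
    have := hdeg6 u
    omega
  have hTcard : T.card ≤ 18 := by
    have c1 := Finset.card_insert_le a (insert b (insert z
      (((G.neighborFinset a).erase v ∪ (G.neighborFinset b).erase v) ∪
        (G.neighborFinset z).erase v)))
    have c2 := Finset.card_insert_le b (insert z
      (((G.neighborFinset a).erase v ∪ (G.neighborFinset b).erase v) ∪
        (G.neighborFinset z).erase v))
    have c3 := Finset.card_insert_le z
      (((G.neighborFinset a).erase v ∪ (G.neighborFinset b).erase v) ∪
        (G.neighborFinset z).erase v)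
    have c4 := Finset.card_union_le
      ((G.neighborFinset a).erase v ∪ (G.neighborFinset b).erase v)
      ((G.neighborFinset z).erase v)
    have c5 := Finset.card_union_le ((G.neighborFinset a).erase v)
      ((G.neighborFinset b).erase v)
    have d1 := h5 a hva
    have d2 := h5 b hbv.symm
    have d3 := h5 z hvz
    rw [hT]
    omega
  set c' : V → Fin 21 := fun u => if h : u = v then 0 else c ⟨u, h⟩ with hc'
  set used : Finset (Fin 21) := T.image c' with hused
  have husedcard : used.card ≤ 18 := le_trans (Finset.card_image_le) hTcard
  obtain ⟨k, hk⟩ : ∃ k : Fin 21, k ∉ used := by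
    have h2 : (usedᶜ : Finset (Fin 21)).Nonempty := by
      rw [← Finset.card_pos, Finset.card_compl]
      have : Fintype.card (Fin 21) = 21 := Fintype.card_fin 21
      omega
    obtain ⟨k, hk⟩ := h2
    exact ⟨k, by simpa using hk⟩
  have hsqT : ∀ w, G.square.Adj v w → w ∈ T := by
    intro w hw
    rw [square_adj] at hw
    obtain ⟨hne, hcase⟩ := hw
    rcases hcase with hadj | ⟨m, hm1, hm2⟩
    · rcases hN w hadj with rfl | rfl | rfl <;> simp [hT]
    · have hwv : w ≠ v := Ne.symm hne
      rcases hN m hm1 with rfl | rfl | rfl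
      · have : w ∈ (G.neighborFinset m).erase v :=
          Finset.mem_erase.mpr ⟨hwv, by simpa using hm2⟩
        rw [hT]
        simp only [Finset.mem_insert, Finset.mem_union]
        tauto
      · have : w ∈ (G.neighborFinset m).erase v :=
          Finset.mem_erase.mpr ⟨hwv, by simpa using hm2⟩
        rw [hT]
        simp only [Finset.mem_insert, Finset.mem_union]
        tauto
      · have : w ∈ (G.neighborFinset m).erase v :=
          Finset.mem_erase.mpr ⟨hwv, by simpa using hm2⟩
        rw [hT]
        simp only [Finset.mem_insert, Finset.mem_union]
        tauto
  set cc : V → Fin 21 := fun u => if h : u = v then k else c ⟨u, h⟩ with hcc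
  have hfix : ∀ (u : V) (hu : u ≠ v), cc u = c ⟨u, hu⟩ := by
    intro u hu
    rw [hcc]
    exact dif_neg hu
  have hccv : cc v = k := by rw [hcc]; exact dif_pos rfl
  have hususe : ∀ (w : V), w ∈ T → cc w ∈ used := by
    intro w hwT
    have hwv : w ≠ v := by
      intro hcon
      subst hcon
      rw [hT] at hwT
      simp only [Finset.mem_insert, Finset.mem_union, Finset.mem_erase] at hwT
      rcases hwT with rfl | rfl | rfl | ((⟨h1, _⟩ | ⟨h1, _⟩) | ⟨h1, _⟩)
      · exact hva.ne rfl
      · exact hbv.ne rfl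
      · exact hvz.ne rfl
      · exact h1 rfl
      · exact h1 rfl
      · exact h1 rfl
    refine Finset.mem_image.mpr ⟨w, hwT, ?_⟩
    rw [hc', hfix w hwv]
    exact dif_neg hwv
  have hvalid : ∀ {u w : V}, G.square.Adj u w → cc u ≠ cc w := by
    intro u w huw
    rw [square_adj] at huw
    obtain ⟨hne, hor⟩ := huw
    by_cases hu : u = v
    · rw [hu] at hne hor ⊢
      have hwv : w ≠ v := Ne.symm hne
      have hwT : w ∈ T := hsqT w ((square_adj G v w).mpr ⟨hne, hor⟩)
      rw [hccv]
      intro hcon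
      exact hk (hcon ▸ hususe w hwT)
    · by_cases hw : w = v
      · rw [hw] at hne hor ⊢
        have huT : u ∈ T := hsqT u ((square_adj G v u).mpr
          ⟨Ne.symm hne, by
            rcases hor with hadj | ⟨m, hm1, hm2⟩
            · exact Or.inl hadj.symm
            · exact Or.inr ⟨m, hm2.symm, hm1.symm⟩⟩)
        rw [hccv]
        intro hcon
        exact hk (hcon.symm ▸ hususe u huT)
      · -- both distinct from v : use the coloring of H
        have hsq2 : H.square.Adj ⟨u, hu⟩ ⟨w, hw⟩ := by
          rw [square_adj]
          refine ⟨fun e => hne (congrArg Subtype.val e), ?_⟩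
          rcases hor with hadj | ⟨m, hm1, hm2⟩
          · exact Or.inl (Or.inl hadj)
          · by_cases hm : m = v
            · subst hm
              rcases hN u hm1.symm with rfl | rfl | rfl <;>
                rcases hN w hm2 with rfl | rfl | rfl
              · exact absurd rfl hne
              · exact Or.inl (Or.inl hab)
              · exact Or.inl (Or.inr (Or.inl ⟨rfl, rfl⟩))
              · exact Or.inl (Or.inl hab.symm)
              · exact absurd rfl hne
              · exact Or.inr ⟨⟨a, hva.ne'⟩, Or.inl hab.symm, Or.inr (Or.inl ⟨rfl, rfl⟩)⟩
              · exact Or.inl (Or.inr (Or.inr ⟨rfl, rfl⟩))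
              · exact Or.inr ⟨⟨a, hva.ne'⟩, Or.inr (Or.inr ⟨rfl, rfl⟩), Or.inl hab⟩
              · exact absurd rfl hne
            · exact Or.inr ⟨⟨m, hm⟩, Or.inl hm1, Or.inl hm2⟩
        have := c.valid hsq2
        rw [hfix u hu, hfix w hw]
        exact this
  have hcol : G.square.Colorable 21 := ⟨SimpleGraph.Coloring.mk cc hvalid⟩
  have hle : chi2 G ≤ 21 := by
    have := hcol.chromaticNumber_le
    unfold chi2
    exact_mod_cast this
  exact absurd hchi (not_lt.mpr hle)
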